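/- For any graph H with chromatic number χ(H) ≤ 3 and p = 2, every graph obtained from H by simultaneously splitting all vertices of an independent set U of H (replacing each v ∈ U by deg(v) new degree-one vertices, one per neighbor) belongs to the decomposition family M(H^3); in particular, for each such split graph S and t = |V(H^3)|, H^3 ⊆ S ∨ I_t. -/

import Mathlib

open SimpleGraph

/-- The lollipop `C_{k,ℓ}`: a cycle on vertices `0,…,k-1` together with a pendant
path `0, k, k+1, …, k+ℓ-1` appended to the cycle vertex `0` (the *center*). -/
def lollipop (k l : ℕ) : SimpleGraph (Fin (k + l)) :=
  SimpleGraph.fromRel (fun a b =>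
    (b.val = a.val + 1 ∧ b.val < k) ∨ (a.val = 0 ∧ b.val = k - 1) ∨
    (a.val = 0 ∧ b.val = k) ∨ (b.val = a.val + 1 ∧ k ≤ a.val))

/-- The edge blow-up `H^{p+1}` of a graph `H`: each edge of `H` is replaced by a
clique of order `p+1`, the `p-1` new vertices of the cliques being all distinct. -/
def edgeBlowup {V : Type*} (H : SimpleGraph V) (p : ℕ) :
    SimpleGraph (V ⊕ (H.edgeSet × Fin (p - 1))) where
  Adj x y := match x, y with
    | .inl a, .inl b => H.Adj a b
    | .inl a, .inr e => a ∈ (e.1 : Sym2 V)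
    | .inr e, .inl a => a ∈ (e.1 : Sym2 V)
    | .inr e, .inr f => e.1 = f.1 ∧ e.2 ≠ f.2
  symm := by constructor; rintro (a | e) (b | f) h <;> simp_all <;> tauto
  loopless := by constructor; rintro (a | e) h <;> simp_all

/-- `A` is contained in `B` as a subgraph (there is an injective graph homomorphism). -/
def IsCont {α β : Type*} (A : SimpleGraph α) (B : SimpleGraph β) : Prop :=
  ∃ f : α → β, Function.Injective f ∧ ∀ ⦃a b⦄, A.Adj a b → B.Adj (f a) (f b)

/-- The join `G ∨ H` of two graphs: all edges between the two graphs are added. -/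
def gJoin {α β : Type*} (G : SimpleGraph α) (H : SimpleGraph β) : SimpleGraph (α ⊕ β) where
  Adj x y := match x, y with
    | .inl a, .inl b => G.Adj a b
    | .inr a, .inr b => H.Adj a b
    | .inl _, .inr _ => True
    | .inr _, .inl _ => True
  symm := by constructor; rintro (a | a) (b | b) h <;> first | exact h.symm | trivial
  loopless := by constructor; rintro (a | a) h <;> first | exact G.loopless.irrefl _ h | exact H.loopless.irrefl _ h

/-- The disjoint union of two graphs. -/
def dUnion {α β : Type*} (G : SimpleGraph α) (H : SimpleGraph β) : SimpleGraph (α ⊕ β) where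
  Adj x y := match x, y with
    | .inl a, .inl b => G.Adj a b
    | .inr a, .inr b => H.Adj a b
    | _, _ => False
  symm := by constructor; rintro (a | a) (b | b) h <;> first | exact h.symm | exact h
  loopless := by constructor; rintro (a | a) h <;> first | exact G.loopless.irrefl _ h | exact H.loopless.irrefl _ h

/-- `a` vertex-disjoint copies of the graph `G`. -/
def copies {β : Type*} (a : ℕ) (G : SimpleGraph β) : SimpleGraph (Fin a × β) where
  Adj x y := x.1 = y.1 ∧ G.Adj x.2 y.2
  symm := by constructor; rintro x y ⟨h1, h2⟩; exact ⟨h1.symm, h2.symm⟩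
  loopless := by constructor; rintro x ⟨h1, h2⟩; exact G.loopless.irrefl _ h2

/-- The complete multipartite graph `K_{p}(m,…,m)` with `p` parts of size `m`. -/
def completeMultipartite (p m : ℕ) : SimpleGraph (Fin p × Fin m) where
  Adj x y := x.1 ≠ y.1
  symm := ⟨fun _ _ h => h.symm⟩

/-- `H(n,p,q) = K_{q-1} ∨ T_p(n-q+1)`. -/
def Hgraph (n p q : ℕ) : SimpleGraph (Fin (q - 1) ⊕ Fin (n - (q - 1))) :=
  gJoin (completeGraph (Fin (q - 1))) (turanGraph (n - (q - 1)) p)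

/-- The number of edges of a graph. -/
noncomputable def numEdges {α : Type*} (G : SimpleGraph α) : ℕ := Nat.card G.edgeSet

/-- `E` (a graph on `n` vertices) is the unique extremal `H`-free graph on `n`
vertices: it is `H`-free, every `H`-free graph on `n` vertices has at most as many
edges, and any `H`-free graph attaining this maximum is isomorphic to `E`. -/
def UniqueExtremal {W α : Type*} (H : SimpleGraph W) (n : ℕ) (E : SimpleGraph α) : Prop :=
  ¬ IsCont H E ∧ Nat.card α = n ∧
    ∀ G : SimpleGraph (Fin n), ¬ IsCont H G →
      numEdges G ≤ numEdges E ∧ (numEdges G = numEdges E → Nonempty (G ≃g E))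

/-- The member of the family `𝒴_{k+1,ℓ+1}` obtained from the path `P_{k+1}`
(on `Fin (k+1)`) by appending a path `P_{ℓ+1}` to its vertex `j` (the branching
vertex), the appended path having the `ℓ` extra vertices `Fin l`. -/
def Ygraph (k l j : ℕ) : SimpleGraph (Fin (k + 1) ⊕ Fin l) :=
  SimpleGraph.fromRel (fun x y => match x, y with
    | .inl a, .inl b => b.val = a.val + 1
    | .inl a, .inr b => a.val = j ∧ b.val = 0
    | .inr a, .inr b => b.val = a.val + 1
    | _, _ => False)

/-- The graph obtained from `H` by splitting every vertex of `U`: each `v ∈ U`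
is replaced by `deg v` new vertices, one for each neighbor `w` of `v`, joined to
`w` only. -/
def splitGraph {V : Type*} (H : SimpleGraph V) (U : Set V) :
    SimpleGraph ({v : V // v ∉ U} ⊕ {p : V × V // p.1 ∈ U ∧ H.Adj p.1 p.2}) where
  Adj x y := match x, y with
    | .inl a, .inl b => H.Adj a.1 b.1
    | .inl a, .inr e => e.1.2 = a.1
    | .inr e, .inl a => e.1.2 = a.1
    | .inr _, .inr _ => False
  symm := by constructor; rintro (a | e) (b | f) h <;> first | exact h.symm | exact h
  loopless := by constructor; rintro (a | e) h <;> simp_all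

/-- For any finite graph `H` with chromatic number at most `3` and
any independent set `U` of `H`, the graph `S` obtained from `H` by splitting all
vertices of `U` satisfies `H^3 ⊆ S ∨ I_t` with `t = |V(H^3)|`. -/
theorem stmt17 {V : Type*} [Fintype V] (H : SimpleGraph V)
    (hchr : H.chromaticNumber ≤ 3) (U : Set V)
    (hU : ∀ u ∈ U, ∀ v ∈ U, ¬ H.Adj u v)
    (t : ℕ) (htt : t = Nat.card (V ⊕ (H.edgeSet × Fin (2 - 1)))) :
    IsCont (edgeBlowup H 2)
      (gJoin (splitGraph H U) (⊥ : SimpleGraph (Fin t))) := by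
  classical
  obtain ⟨e⟩ : Nonempty ((V ⊕ (H.edgeSet × Fin (2 - 1))) ≃ Fin t) :=
    ⟨Finite.equivFinOfCardEq htt.symm⟩
  let W := ({v : V // v ∉ U} ⊕ {p : V × V // p.1 ∈ U ∧ H.Adj p.1 p.2}) ⊕ Fin t
  let apex : H.edgeSet × Fin (2 - 1) → W := fun ed =>
    if h : ∃ u, u ∈ (ed.1.1 : Sym2 V) ∧ u ∈ U then
      Sum.inl (Sum.inr ⟨(h.choose, Sym2.Mem.other h.choose_spec.1),
        h.choose_spec.2, by
          have hs := Sym2.other_spec h.choose_spec.1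
          have h2 := ed.1.2
          rw [← hs] at h2
          exact h2⟩)
    else Sum.inr (e (Sum.inr ed))
  let f : (V ⊕ (H.edgeSet × Fin (2 - 1))) → W := fun x =>
    match x with
    | .inl v => if hv : v ∈ U then Sum.inr (e (Sum.inl v)) else Sum.inl (Sum.inl ⟨v, hv⟩)
    | .inr ed => apex ed
  have hedge : ∀ ed : H.edgeSet × Fin (2 - 1),
      ∀ h : ∃ u, u ∈ (ed.1.1 : Sym2 V) ∧ u ∈ U,
      s(h.choose, Sym2.Mem.other h.choose_spec.1) = ed.1.1 := fun ed h =>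
    Sym2.other_spec h.choose_spec.1
  refine ⟨f, ?_, ?_⟩
  · rintro (v | ed) (w | fd) hab
    · simp only [f] at hab
      split_ifs at hab with h1 h2 h2
      all_goals simp at hab
      all_goals exact congrArg Sum.inl hab
    · simp only [f, apex] at hab
      split_ifs at hab with h1 h2 h2
      all_goals simp at hab
    · simp only [f, apex] at hab
      split_ifs at hab with h1 h2 h2
      all_goals simp at hab
    · simp only [f, apex] at hab
      split_ifs at hab with h1 h2 h2
      · have hp := congrArg (fun x : {p : V × V // p.1 ∈ U ∧ H.Adj p.1 p.2} => s(x.1.1, x.1.2))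
          (Sum.inr.inj (Sum.inl.inj hab))
        have e1 := hedge ed h1
        have e2 := hedge fd h2
        have eq1 : (ed.1 : Sym2 V) = fd.1 := e1.symm.trans (hp.trans e2)
        have hlt1 := ed.2.2
        have hlt2 := fd.2.2
        have hef : ed = fd := Prod.ext (Subtype.ext eq1) (Fin.ext (by omega))
        exact congrArg Sum.inr hef
      · simp at hab
        exact congrArg Sum.inr hab
  · rintro (a | ed) (b | fd) hab <;>
      simp only [edgeBlowup] at hab
    · simp only [f]
      split_ifs with h1 h2 h2
      · exact absurd hab (hU a h1 b h2)
      · trivial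
      · trivial
      · exact hab
    · -- a ∈ fd.1.1
      simp only [f, apex]
      split_ifs with h1 h2 h2
      · trivial
      · exact absurd ⟨a, hab, h1⟩ h2
      · -- a ∉ U, apex split-vertex: need pair.2 = a
        have hs := hedge fd h2
        have hne : h2.choose ≠ a := fun hh => h1 (hh ▸ h2.choose_spec.2)
        have ha : a = Sym2.Mem.other h2.choose_spec.1 := by
          have hm : a ∈ s(h2.choose, Sym2.Mem.other h2.choose_spec.1) := by
            rw [hs]; exact hab
          rcases Sym2.mem_iff.mp hm with h | h
          · exact absurd h.symm hne
          · exact h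
        exact ha.symm
      · trivial
    · -- symmetric: b ∈ ed.1.1
      simp only [f, apex]
      split_ifs with h1 h2 h2
      · trivial
      · -- b ∉ U, apex split-vertex
        have hs := hedge ed h1
        have hne : h1.choose ≠ b := fun hh => h2 (hh ▸ h1.choose_spec.2)
        have hb : b = Sym2.Mem.other h1.choose_spec.1 := by
          have hm : b ∈ s(h1.choose, Sym2.Mem.other h1.choose_spec.1) := by
            rw [hs]; exact hab
          rcases Sym2.mem_iff.mp hm with h | h
          · exact absurd h.symm hne
          · exact h
        exact hb.symm
      · exact absurd ⟨b, hab, h2⟩ h1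
      · trivial
    · refine absurd ?_ hab.2
      have hb1 := ed.2.2
      have hb2 := fd.2.2
      exact Fin.ext (by omega)
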